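/- Let G be a d-regular simple graph on a finite nonempty vertex set V, let K be a natural number with 1 ≤ K, and let u be a real number with u > 2. For B ⊆ V, let n₂(B) be the number of edges of G with both endpoints in B and n₁(B) the number of edges with exactly one endpoint in B (so n₁(B) = |B|·d − 2·n₂(B)). Then there exists a set B ⊆ V with |B| ≤ K and n₁(B) + u·n₂(B) ≥ K·d + (u−2)·K(K−1)/2 if and only if G contains a clique of K vertices. -/

import Mathlib

open Finset

variable {V : Type*} [Fintype V] [DecidableEq V]

/-- `innerEdges G B`: the number of edges of `G` with both endpoints in `B`. -/
def innerEdges (G : SimpleGraph V) [DecidableRel G.Adj] (B : Finset V) : ℕ :=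
  (G.edgeFinset.filter fun e => ∀ v ∈ e, v ∈ B).card

/-- `crossEdges G B`: the number of edges of `G` with exactly one endpoint in `B`. -/
def crossEdges (G : SimpleGraph V) [DecidableRel G.Adj] (B : Finset V) : ℕ :=
  (G.edgeFinset.filter fun e => ∃ v ∈ e, v ∈ B ∧ ∃ w ∈ e, w ∉ B).card


lemma inner_subset_offDiag (G : SimpleGraph V) [DecidableRel G.Adj] (B : Finset V) :
    (G.edgeFinset.filter fun e => ∀ v ∈ e, v ∈ B) ⊆ B.offDiag.image Sym2.mk.uncurry := by
  intro e he
  simp only [mem_filter, SimpleGraph.mem_edgeFinset] at he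
  obtain ⟨he1, he2⟩ := he
  induction e with
  | _ a b =>
    have hne : a ≠ b := by
      intro h; exact G.not_isDiag_of_mem_edgeSet he1 (by simp [h])
    refine mem_image.2 ⟨(a, b), ?_, rfl⟩
    simp [Finset.mem_offDiag, he2 a (by simp), he2 b (by simp), hne]

lemma inner_le_choose (G : SimpleGraph V) [DecidableRel G.Adj] (B : Finset V) :
    innerEdges G B ≤ B.card.choose 2 := by
  rw [← Sym2.card_image_offDiag]
  exact card_le_card (inner_subset_offDiag G B)

lemma clique_inner (G : SimpleGraph V) [DecidableRel G.Adj] {K : ℕ} {s : Finset V}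
    (hs : G.IsNClique K s) : innerEdges G s = K.choose 2 := by
  have : (G.edgeFinset.filter fun e => ∀ v ∈ e, v ∈ s) = s.offDiag.image Sym2.mk.uncurry := by
    refine Subset.antisymm (inner_subset_offDiag G s) ?_
    intro e he
    obtain ⟨⟨a, b⟩, hab, rfl⟩ := mem_image.1 he
    rw [Finset.mem_offDiag] at hab
    obtain ⟨ha, hb, hne⟩ := hab
    have hadj : G.Adj a b := hs.1 ha hb hne
    simp only [mem_filter, SimpleGraph.mem_edgeFinset]
    refine ⟨hadj, ?_⟩
    intro v hv
    rcases Sym2.mem_iff.1 hv with rfl | rfl <;> assumption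
  rw [innerEdges, this, Sym2.card_image_offDiag, hs.2]

lemma handshake (G : SimpleGraph V) [DecidableRel G.Adj] {d : ℕ}
    (hreg : G.IsRegularOfDegree d) (B : Finset V) :
    crossEdges G B + 2 * innerEdges G B = B.card * d := by
  have h1 : ∑ v ∈ B, G.degree v = B.card * d := by
    rw [Finset.sum_congr rfl fun v _ => hreg v, Finset.sum_const, smul_eq_mul]
  have h2 : ∑ v ∈ B, G.degree v
      = ∑ e ∈ G.edgeFinset, (B.filter (fun v => v ∈ e)).card := by
    calc ∑ v ∈ B, G.degree v
        = ∑ v ∈ B, (G.edgeFinset.filter (fun e => v ∈ e)).card := by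
          refine Finset.sum_congr rfl fun v _ => ?_
          rw [← SimpleGraph.card_incidenceFinset_eq_degree,
            SimpleGraph.incidenceFinset_eq_filter]
      _ = ∑ v ∈ B, ∑ e ∈ G.edgeFinset, if v ∈ e then 1 else 0 := by
          simp only [Finset.card_filter]
      _ = ∑ e ∈ G.edgeFinset, ∑ v ∈ B, if v ∈ e then 1 else 0 := Finset.sum_comm
      _ = ∑ e ∈ G.edgeFinset, (B.filter (fun v => v ∈ e)).card := by
          simp only [Finset.card_filter]
  have h3 : ∀ e ∈ G.edgeFinset, (B.filter (fun v => v ∈ e)).card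
      = (if (∃ v ∈ e, v ∈ B ∧ ∃ w ∈ e, w ∉ B) then 1 else 0)
        + (if (∀ v ∈ e, v ∈ B) then 2 else 0) := by
    intro e he
    rw [SimpleGraph.mem_edgeFinset] at he
    induction e with
    | _ a b =>
      have hne : a ≠ b := by
        intro h; exact G.not_isDiag_of_mem_edgeSet he (by simp [h])
      have hfil : B.filter (fun v => v ∈ s(a, b)) = B ∩ {a, b} := by
        ext v; simp [Sym2.mem_iff, and_comm]
      rw [hfil]
      by_cases ha : a ∈ B <;> by_cases hb : b ∈ B
      · have : B ∩ {a, b} = {a, b} := by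
          apply Finset.inter_eq_right.2; intro v hv
          rcases Finset.mem_insert.1 hv with rfl | hv
          · exact ha
          · rw [Finset.mem_singleton.1 hv]; exact hb
        rw [this, Finset.card_insert_of_notMem (by simp [hne]), Finset.card_singleton]
        simp [ha, hb]
      · have : B ∩ {a, b} = {a} := by
          ext v
          simp only [Finset.mem_inter, Finset.mem_insert, Finset.mem_singleton]
          constructor
          · rintro ⟨hvB, rfl | rfl⟩
            · rfl
            · exact absurd hvB hb
          · rintro rfl; exact ⟨ha, Or.inl rfl⟩
        rw [this, Finset.card_singleton]
        simp [ha, hb]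
      · have : B ∩ {a, b} = {b} := by
          ext v
          simp only [Finset.mem_inter, Finset.mem_insert, Finset.mem_singleton]
          constructor
          · rintro ⟨hvB, rfl | rfl⟩
            · exact absurd hvB ha
            · rfl
          · rintro rfl; exact ⟨hb, Or.inr rfl⟩
        rw [this, Finset.card_singleton]
        simp [ha, hb]
      · have : B ∩ {a, b} = ∅ := by
          ext v
          simp only [Finset.mem_inter, Finset.mem_insert, Finset.mem_singleton,
            Finset.notMem_empty, iff_false]
          rintro ⟨hvB, rfl | rfl⟩ <;> [exact ha hvB; exact hb hvB]
        rw [this, Finset.card_empty]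
        simp [ha, hb]
  rw [← h1, h2, Finset.sum_congr rfl h3, Finset.sum_add_distrib]
  rw [← Finset.sum_filter, ← Finset.sum_filter, Finset.sum_const, Finset.sum_const]
  simp [crossEdges, innerEdges, mul_comm]

/-- Combinatorial core of the reduction from Clique proving NP-hardness of maximizing the
sum of voters' utilities: in a `d`-regular graph on a nonempty vertex set, for `K ≥ 1` and
`u > 2`, with `n₁(B) = |B|·d − 2·n₂(B)`, there is a set `B` of at most `K` vertices with
`n₁(B) + u·n₂(B) ≥ K·d + (u−2)·K(K−1)/2` iff `G` contains a clique of `K` vertices. -/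
theorem clique_iff_high_utility_bundle [Nonempty V]
    (G : SimpleGraph V) [DecidableRel G.Adj] (d K : ℕ)
    (hreg : G.IsRegularOfDegree d) (hK : 1 ≤ K) (u : ℝ) (hu : 2 < u) :
    (∀ B : Finset V, (crossEdges G B : ℝ) = B.card * d - 2 * innerEdges G B) ∧
    ((∃ B : Finset V, B.card ≤ K ∧
        (K : ℝ) * d + (u - 2) * (K * ((K : ℝ) - 1)) / 2 ≤
          (crossEdges G B : ℝ) + u * (innerEdges G B : ℝ)) ↔
      ∃ s : Finset V, G.IsNClique K s) := by
  have hcross : ∀ B : Finset V, (crossEdges G B : ℝ) = B.card * d - 2 * innerEdges G B := by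
    intro B
    have h := handshake G hreg B
    have h' : ((crossEdges G B : ℕ) : ℝ) + 2 * ((innerEdges G B : ℕ) : ℝ)
        = ((B.card : ℕ) : ℝ) * d := by exact_mod_cast h
    linarith
  refine ⟨hcross, ?_, ?_⟩
  · rintro ⟨B, hBK, hineq⟩
    rcases eq_or_lt_of_le hK with hK1 | hK2
    · refine ⟨{Classical.arbitrary V}, ?_, ?_⟩
      · intro a ha b hb hab
        simp only [coe_singleton, Set.mem_singleton_iff] at ha hb
        exact absurd (ha.trans hb.symm) hab
      · simp [← hK1]
    · have hK2 : 2 ≤ K := hK2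
      rw [hcross B] at hineq
      have hbd : (B.card : ℝ) * d ≤ (K : ℝ) * d := by
        have : (B.card : ℝ) ≤ K := by exact_mod_cast hBK
        exact mul_le_mul_of_nonneg_right this (by positivity)
      have hinner : (K : ℝ) * ((K : ℝ) - 1) / 2 ≤ (innerEdges G B : ℝ) := by
        have h1 : (u - 2) * ((K : ℝ) * ((K : ℝ) - 1) / 2) ≤ (u - 2) * innerEdges G B := by
          nlinarith [hineq, hbd]
        have h2 : (0 : ℝ) < u - 2 := by linarith
        exact le_of_mul_le_mul_left h1 h2
      have hle : (innerEdges G B : ℝ) ≤ (B.card : ℝ) * ((B.card : ℝ) - 1) / 2 := by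
        have := inner_le_choose G B
        have h' : (innerEdges G B : ℝ) ≤ (B.card.choose 2 : ℝ) := by exact_mod_cast this
        rwa [Nat.cast_choose_two] at h'
      have hKb : K ≤ B.card := by
        by_contra hcon
        push_neg at hcon
        have hb1 : (B.card : ℝ) ≤ (K : ℝ) - 1 := by
          have : B.card + 1 ≤ K := hcon
          have : ((B.card + 1 : ℕ) : ℝ) ≤ K := by exact_mod_cast this
          push_cast at this; linarith
        have hb0 : (0 : ℝ) ≤ (B.card : ℝ) := Nat.cast_nonneg _
        have hKr : (2 : ℝ) ≤ K := by exact_mod_cast hK2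
        nlinarith [hinner, hle]
      have hBcard : B.card = K := le_antisymm hBK hKb
      have hinnerK : innerEdges G B = K.choose 2 := by
        refine le_antisymm (hBcard ▸ inner_le_choose G B) ?_
        have : ((K.choose 2 : ℕ) : ℝ) ≤ (innerEdges G B : ℝ) := by
          rw [Nat.cast_choose_two]; linarith
        exact_mod_cast this
      have heq : (G.edgeFinset.filter fun e => ∀ v ∈ e, v ∈ B) = B.offDiag.image Sym2.mk.uncurry := by
        refine Finset.eq_of_subset_of_card_le (inner_subset_offDiag G B) ?_
        rw [Sym2.card_image_offDiag, hBcard]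
        exact le_of_eq hinnerK.symm
      refine ⟨B, ?_, hBcard⟩
      intro a ha b hb hab
      have : s(a, b) ∈ B.offDiag.image Sym2.mk.uncurry := by
        refine mem_image.2 ⟨(a, b), ?_, rfl⟩
        exact Finset.mem_offDiag.2 ⟨Finset.mem_coe.1 ha, Finset.mem_coe.1 hb, hab⟩
      rw [← heq] at this
      have := (mem_filter.1 this).1
      rwa [SimpleGraph.mem_edgeFinset] at this
  · rintro ⟨s, hs⟩
    refine ⟨s, le_of_eq hs.2, ?_⟩
    rw [hcross s, clique_inner G hs, hs.2]
    rw [Nat.cast_choose_two]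
    ring_nf
    linarith
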